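/- Let a be real with |a| < 1/2. For every f ∈ L²((0,∞)) and every x > 0 the integral (R_a f)(x) = ∫_0^∞ (y/x)^a · e^{−(x+y)/2}/(x+y) · f(y) dy converges absolutely, the resulting function R_a f belongs to L²((0,∞)), and ‖R_a f‖_{L²} ≤ (π/cos(πa)) ‖f‖_{L²}; in particular R_a defines a bounded linear operator on L²((0,∞)). -/

import Mathlib

open MeasureTheory Set Real


lemma betaOoo {s : ℝ} (h0 : 0 < s) (h1 : s < 1) :
    IntegrableOn (fun u : ℝ => u ^ (s-1) * (1-u) ^ (-s)) (Ioo 0 1) ∧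
    ∫ u in Ioo (0:ℝ) 1, u ^ (s-1) * (1-u) ^ (-s) = π / Real.sin (π * s) := by
  have hs : (0:ℝ) < 1 - s := by linarith
  have hre : 0 < (s : ℂ).re := by simpa using h0
  have hre' : 0 < ((1:ℂ) - s).re := by simpa using hs
  have hconv := Complex.betaIntegral_convergent hre hre'
  have hval : Complex.betaIntegral s (1 - s) = ((π / Real.sin (π * s) : ℝ) : ℂ) := by
    have := Complex.Gamma_mul_Gamma_eq_betaIntegral hre hre'
    rw [add_sub_cancel, Complex.Gamma_one, one_mul] at this
    rw [← this, show ((1:ℂ) - s) = ((1 - s : ℝ) : ℂ) by push_cast; ring,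
      Complex.Gamma_ofReal, Complex.Gamma_ofReal, ← Complex.ofReal_mul,
      Real.Gamma_mul_Gamma_one_sub]
  have hpt : ∀ u ∈ Ioo (0:ℝ) 1,
      ((u : ℂ) ^ ((s:ℂ) - 1) * ((1:ℂ) - u) ^ (((1:ℂ) - s) - 1))
        = ((u ^ (s-1) * (1-u) ^ (-s) : ℝ) : ℂ) := by
    intro u hu
    rw [Complex.ofReal_mul, Complex.ofReal_cpow hu.1.le,
      Complex.ofReal_cpow (by linarith [hu.2] : (0:ℝ) ≤ 1 - u)]
    push_cast
    ring_nf
  have hint : IntegrableOn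
      (fun u : ℝ => ((u:ℂ) ^ ((s:ℂ)-1) * ((1:ℂ)-u) ^ (((1:ℂ)-s)-1))) (Ioo 0 1) := by
    rw [intervalIntegrable_iff_integrableOn_Ioo_of_le (by norm_num : (0:ℝ) ≤ 1)] at hconv
    exact hconv
  constructor
  · refine (MeasureTheory.IntegrableOn.congr_fun hint.norm (fun u hu => ?_) measurableSet_Ioo)
    rw [hpt u hu, Complex.norm_real, norm_eq_abs,
      abs_of_nonneg (mul_nonneg (Real.rpow_nonneg hu.1.le _) (Real.rpow_nonneg (by linarith [hu.2]) _))]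
  · have h2 := hval
    rw [Complex.betaIntegral, intervalIntegral.integral_of_le (by norm_num : (0:ℝ) ≤ 1),
      integral_Ioc_eq_integral_Ioo,
      setIntegral_congr_fun measurableSet_Ioo hpt] at h2
    apply Complex.ofReal_injective
    rw [← h2]
    exact (integral_ofReal (𝕜 := ℂ)).symm

lemma Jio {s : ℝ} (h0 : 0 < s) (h1 : s < 1) :
    IntegrableOn (fun t : ℝ => t ^ (s-1) / (1+t)) (Ioi 0) ∧
    ∫ t in Ioi (0:ℝ), t ^ (s-1) / (1+t) = π / Real.sin (π * s) := by
  have himg : (fun u : ℝ => u / (1-u)) '' Ioo 0 1 = Ioi 0 := by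
    ext t
    constructor
    · rintro ⟨u, hu, rfl⟩
      exact div_pos hu.1 (by linarith [hu.2])
    · intro ht
      have ht' : (0:ℝ) < t := ht
      refine ⟨t / (1+t), ⟨div_pos ht' (by linarith), by rw [div_lt_one (by linarith)]; linarith⟩, ?_⟩
      show t/(1+t) / (1 - t/(1+t)) = t
      rw [show 1 - t/(1+t) = 1/(1+t) by field_simp; ring]
      field_simp
  have hderiv : ∀ u ∈ Ioo (0:ℝ) 1, HasDerivWithinAt (fun u : ℝ => u / (1-u))
      (((1-u)^2)⁻¹) (Ioo 0 1) u := by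
    intro u hu
    have hne : 1 - u ≠ 0 := by have := hu.2; intro h; rw [sub_eq_zero] at h; linarith
    have hd := ((hasDerivAt_id u).div ((hasDerivAt_id u).const_sub 1) hne).hasDerivWithinAt
      (s := Ioo (0:ℝ) 1)
    exact hd.congr_deriv (by simp only [id]; ring)
  have hinj : InjOn (fun u : ℝ => u / (1-u)) (Ioo 0 1) := by
    intro u hu v hv h
    have h1 : 1 - u ≠ 0 := by have := hu.2; intro h; linarith [sub_eq_zero.mp h]
    have h2 : 1 - v ≠ 0 := by have := hv.2; intro h; linarith [sub_eq_zero.mp h]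
    field_simp at h
    nlinarith [h]
  have key := integral_image_eq_integral_abs_deriv_smul measurableSet_Ioo hderiv hinj
      (fun t : ℝ => t ^ (s-1) / (1+t))
  have keyI := integrableOn_image_iff_integrableOn_abs_deriv_smul measurableSet_Ioo hderiv hinj
      (fun t : ℝ => t ^ (s-1) / (1+t))
  rw [himg] at key keyI
  have hpt : ∀ u ∈ Ioo (0:ℝ) 1,
      |((1-u)^2)⁻¹| • ((fun t : ℝ => t ^ (s-1) / (1+t)) (u / (1-u)))
        = u ^ (s-1) * (1-u) ^ (-s) := by
    intro u hu
    have hv : (0:ℝ) < 1 - u := by linarith [hu.2]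
    have h1 : 1 + u/(1-u) = (1-u)⁻¹ := by field_simp; ring
    have h2 : (u/(1-u)) ^ (s-1) = u ^ (s-1) * (1-u) ^ (-(s-1)) := by
      rw [Real.div_rpow hu.1.le hv.le, Real.rpow_neg hv.le, div_eq_mul_inv]
    have h3 : |((1-u)^2)⁻¹| = (1-u) ^ (-2 : ℝ) := by
      rw [abs_of_nonneg (by positivity), ← Real.rpow_two, ← Real.rpow_neg hv.le]
    simp only [smul_eq_mul, h1, h2, h3]
    rw [div_inv_eq_mul, show (-s : ℝ) = (-2) + (-(s-1)) + 1 by ring,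
      Real.rpow_add hv, Real.rpow_add hv, Real.rpow_one]
    ring
  obtain ⟨hbi, hbv⟩ := betaOoo h0 h1
  constructor
  · rw [keyI]
    exact hbi.congr_fun (fun u hu => (hpt u hu).symm) measurableSet_Ioo
  · rw [key, setIntegral_congr_fun measurableSet_Ioo hpt, hbv]

lemma rowL {x c : ℝ} (hx : 0 < x) (hc1 : -1 < c) (hc0 : c < 0) :
    ∫⁻ y in Ioi (0:ℝ), ENNReal.ofReal ((y/x) ^ c / (x+y))
      = ENNReal.ofReal (π / Real.sin (π * (c+1))) := by
  obtain ⟨hJi, hJv⟩ := Jio (by linarith : (0:ℝ) < c + 1) (by linarith : c + 1 < 1)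
  simp only [add_sub_cancel_right] at hJi hJv
  have hxi : (0:ℝ) < x⁻¹ := inv_pos.mpr hx
  have heq : ∀ y ∈ Ioi (0:ℝ), (y/x) ^ c / (x+y)
      = x⁻¹ * ((x⁻¹ * y) ^ c / (1 + x⁻¹ * y)) := by
    intro y hy
    have hy' : (0:ℝ) < y := hy
    have hxy : (0:ℝ) < x + y := by linarith
    rw [inv_mul_eq_div x y, show 1 + y/x = (x+y)/x by field_simp]
    field_simp
  have hcomp : IntegrableOn (fun y : ℝ => (x⁻¹ * y) ^ c / (1 + x⁻¹ * y)) (Ioi 0) := by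
    have := (integrableOn_Ioi_comp_mul_left_iff (fun t : ℝ => t ^ c / (1+t)) 0 hxi).mpr
    simpa using this (by simpa using hJi)
  have hint : IntegrableOn (fun y : ℝ => (y/x) ^ c / (x+y)) (Ioi 0) :=
    MeasureTheory.IntegrableOn.congr_fun (hcomp.const_mul x⁻¹) (fun y hy => (heq y hy).symm) measurableSet_Ioi
  have hval : ∫ y in Ioi (0:ℝ), (y/x) ^ c / (x+y) = π / Real.sin (π * (c+1)) := by
    rw [setIntegral_congr_fun measurableSet_Ioi heq, MeasureTheory.integral_const_mul]
    have := integral_comp_mul_left_Ioi (fun t : ℝ => t ^ c / (1+t)) 0 hxi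
    simp only [mul_zero, smul_eq_mul, inv_inv] at this
    rw [this, hJv, ← mul_assoc, inv_mul_cancel₀ hx.ne', one_mul]
  rw [← hval]
  rw [← ofReal_integral_eq_lintegral_ofReal hint]
  filter_upwards [ae_restrict_mem measurableSet_Ioi] with y hy
  have hy' : (0:ℝ) < y := hy
  positivity


lemma kern_row {a x y : ℝ} (hx : 0 < x) (hy : 0 < y) :
    ((y/x) ^ a * (Real.exp (-(x + y) / 2) / (x + y))) * (x/y) ^ (2⁻¹:ℝ)
      ≤ (y/x) ^ (a - 2⁻¹) / (x + y) := by
  have hxy : (0:ℝ) < x + y := by linarith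
  have hyx : (0:ℝ) < y / x := div_pos hy hx
  have hxyr : (x/y) ^ (2⁻¹:ℝ) = (y/x) ^ (-(2⁻¹:ℝ)) := by
    rw [Real.rpow_neg hyx.le, ← Real.inv_rpow (by positivity), inv_div]
  calc ((y/x) ^ a * (Real.exp (-(x + y) / 2) / (x + y))) * (x/y) ^ (2⁻¹:ℝ)
      = (y/x) ^ a * (y/x) ^ (-(2⁻¹:ℝ)) * (Real.exp (-(x + y) / 2) / (x + y)) := by
        rw [hxyr]; ring
    _ = (y/x) ^ (a - 2⁻¹) * (Real.exp (-(x + y) / 2) / (x + y)) := by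
        rw [← Real.rpow_add hyx]; ring_nf
    _ ≤ (y/x) ^ (a - 2⁻¹) * (1 / (x + y)) := by
        apply mul_le_mul_of_nonneg_left _ (Real.rpow_nonneg hyx.le _)
        apply div_le_div_of_nonneg_right (Real.exp_le_one_iff.mpr (by linarith)) hxy.le
    _ = (y/x) ^ (a - 2⁻¹) / (x + y) := by ring

lemma kern_col {a x y : ℝ} (hx : 0 < x) (hy : 0 < y) :
    ((y/x) ^ a * (Real.exp (-(x + y) / 2) / (x + y))) * (y/x) ^ (2⁻¹:ℝ)
      ≤ (x/y) ^ (-(a + 2⁻¹)) / (y + x) := by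
  have hxy : (0:ℝ) < x + y := by linarith
  have hxyd : (0:ℝ) < x / y := div_pos hx hy
  have h1 : (y/x) ^ (2⁻¹:ℝ) = (x/y) ^ (-(2⁻¹:ℝ)) := by
    rw [Real.rpow_neg hxyd.le, ← Real.inv_rpow (by positivity), inv_div]
  have h2 : (y/x) ^ a = (x/y) ^ (-a) := by
    rw [Real.rpow_neg hxyd.le, ← Real.inv_rpow (by positivity), inv_div]
  calc ((y/x) ^ a * (Real.exp (-(x + y) / 2) / (x + y))) * (y/x) ^ (2⁻¹:ℝ)
      = (x/y) ^ (-a) * (x/y) ^ (-(2⁻¹:ℝ)) * (Real.exp (-(x + y) / 2) / (x + y)) := by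
        rw [h1, h2]; ring
    _ = (x/y) ^ (-(a + 2⁻¹)) * (Real.exp (-(x + y) / 2) / (x + y)) := by
        rw [← Real.rpow_add hxyd]; ring_nf
    _ ≤ (x/y) ^ (-(a + 2⁻¹)) * (1 / (x + y)) := by
        apply mul_le_mul_of_nonneg_left _ (Real.rpow_nonneg hxyd.le _)
        apply div_le_div_of_nonneg_right (Real.exp_le_one_iff.mpr (by linarith)) hxy.le
    _ = (x/y) ^ (-(a + 2⁻¹)) / (y + x) := by rw [add_comm y x]; ring

lemma kern_colB {a x y : ℝ} (ha1 : -(1/2:ℝ) < a) (ha2 : a < 1/2) (hx : 0 < x) (hy : 0 < y) :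
    ((y/x) ^ a * (Real.exp (-(x + y) / 2) / (x + y))) * (y/x) ^ (2⁻¹:ℝ)
      ≤ 3 * x ^ (-(a + 2⁻¹)) / x := by
  have hxy : (0:ℝ) < x + y := by linarith
  have hyd : (0:ℝ) < y / x := div_pos hy hx
  have key : ((y/x) ^ a * (Real.exp (-(x + y) / 2) / (x + y))) * (y/x) ^ (2⁻¹:ℝ)
      = (y/x) ^ (a + 2⁻¹) * (Real.exp (-(x + y) / 2) / (x + y)) := by
    rw [show (y/x) ^ a * (Real.exp (-(x + y) / 2) / (x + y)) * (y/x) ^ (2⁻¹:ℝ)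
      = (y/x) ^ a * (y/x) ^ (2⁻¹:ℝ) * (Real.exp (-(x + y) / 2) / (x + y)) by ring,
      ← Real.rpow_add hyd]
  rw [key]
  have hsplit : (y/x) ^ (a + 2⁻¹) = y ^ (a + 2⁻¹) * x ^ (-(a + 2⁻¹)) := by
    rw [Real.div_rpow hy.le hx.le, Real.rpow_neg hx.le, div_eq_mul_inv]
  have hexp : Real.exp (-(x + y) / 2) ≤ Real.exp (-y / 2) := by
    apply Real.exp_le_exp.mpr
    linarith
  have hfr : 1 / (x + y) ≤ 1 / x := by
    apply div_le_div_of_nonneg_left one_pos.le hx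
    linarith
  have hyb : y ^ (a + 2⁻¹) * Real.exp (-y/2) ≤ 3 := by
    have hc0 : (0:ℝ) < a + 2⁻¹ := by linarith
    have hc1 : a + 2⁻¹ ≤ 1 := by linarith
    have h1 : y ^ (a + 2⁻¹) ≤ 1 + y := by
      rcases le_or_gt y 1 with h | h
      · calc y ^ (a + 2⁻¹) ≤ 1 := Real.rpow_le_one hy.le h hc0.le
          _ ≤ 1 + y := by linarith
      · calc y ^ (a + 2⁻¹) ≤ y ^ (1:ℝ) := Real.rpow_le_rpow_of_exponent_le h.le hc1
          _ = y := Real.rpow_one y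
          _ ≤ 1 + y := by linarith
    have h2 : y * Real.exp (-y/2) ≤ 2 := by
      have he : y/2 ≤ Real.exp (y/2) := by
        have := Real.add_one_le_exp (y/2)
        linarith
      have hep : (0:ℝ) < Real.exp (y/2) := Real.exp_pos _
      rw [show -y/2 = -(y/2) by ring, Real.exp_neg, mul_inv_le_iff₀ hep]
      linarith
    have h3 : Real.exp (-y/2) ≤ 1 := Real.exp_le_one_iff.mpr (by linarith)
    calc y ^ (a + 2⁻¹) * Real.exp (-y/2) ≤ (1 + y) * Real.exp (-y/2) := by
          apply mul_le_mul_of_nonneg_right h1 (Real.exp_pos _).le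
      _ = Real.exp (-y/2) + y * Real.exp (-y/2) := by ring
      _ ≤ 1 + 2 := by linarith
      _ = 3 := by norm_num
  calc (y/x) ^ (a + 2⁻¹) * (Real.exp (-(x + y) / 2) / (x + y))
      = y ^ (a + 2⁻¹) * x ^ (-(a + 2⁻¹)) * (Real.exp (-(x + y) / 2) * (1/(x + y))) := by
        rw [hsplit]; ring
    _ ≤ y ^ (a + 2⁻¹) * x ^ (-(a + 2⁻¹)) * (Real.exp (-y/2) * (1/x)) := by
        apply mul_le_mul_of_nonneg_left _ (by positivity)
        apply mul_le_mul hexp hfr (by positivity) (Real.exp_pos _).le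
    _ = (y ^ (a + 2⁻¹) * Real.exp (-y/2)) * (x ^ (-(a + 2⁻¹)) / x) := by ring
    _ ≤ 3 * (x ^ (-(a + 2⁻¹)) / x) := by
        apply mul_le_mul_of_nonneg_right hyb (by positivity)
    _ = 3 * x ^ (-(a + 2⁻¹)) / x := by ring

noncomputable def Kf (a x y : ℝ) : ENNReal :=
  ENNReal.ofReal ((y / x) ^ a * (Real.exp (-(x + y) / 2) / (x + y)))

noncomputable def Wf (x y : ℝ) : ENNReal := ENNReal.ofReal ((x/y) ^ (2⁻¹:ℝ))

lemma Kf_meas (a : ℝ) : Measurable (fun p : ℝ × ℝ => Kf a p.1 p.2) :=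
  (((measurable_snd.div measurable_fst).pow measurable_const).mul
    ((((measurable_fst.add measurable_snd).neg.div_const 2).exp).div
      (measurable_fst.add measurable_snd))).ennreal_ofReal

lemma Kf_meas_x (a x : ℝ) : Measurable (fun y => Kf a x y) :=
  (Kf_meas a).comp (measurable_const.prodMk measurable_id)

lemma Kf_meas_y (a y : ℝ) : Measurable (fun x => Kf a x y) :=
  (Kf_meas a).comp (measurable_id.prodMk measurable_const)

lemma Wf_meas : Measurable (fun p : ℝ × ℝ => Wf p.1 p.2) :=
  ((measurable_fst.div measurable_snd).pow measurable_const).ennreal_ofReal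

lemma Wf_meas_x (x : ℝ) : Measurable (fun y => Wf x y) :=
  Wf_meas.comp (measurable_const.prodMk measurable_id)

lemma Wf_meas_y (y : ℝ) : Measurable (fun x => Wf x y) :=
  Wf_meas.comp (measurable_id.prodMk measurable_const)

lemma cosC (a : ℝ) (ha1 : -(1/2:ℝ) < a) (ha2 : a < 1/2) : 0 < Real.cos (π * a) := by
  apply Real.cos_pos_of_mem_Ioo
  constructor
  · nlinarith [Real.pi_pos]
  · nlinarith [Real.pi_pos]

lemma row_bound {a : ℝ} (ha1 : -(1/2:ℝ) < a) (ha2 : a < 1/2) {x : ℝ} (hx : 0 < x) :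
    ∫⁻ y in Ioi (0:ℝ), Kf a x y * Wf x y
      ≤ ENNReal.ofReal (π / Real.cos (π * a)) := by
  have hb : ∫⁻ y in Ioi (0:ℝ), ENNReal.ofReal ((y/x) ^ (a - 2⁻¹) / (x+y))
      = ENNReal.ofReal (π / Real.cos (π * a)) := by
    rw [rowL hx (by linarith) (by linarith), show a - 2⁻¹ + 1 = a + 2⁻¹ by ring,
      show π * (a + 2⁻¹) = π * a + π / 2 by ring, Real.sin_add_pi_div_two]
  rw [← hb]
  apply lintegral_mono_ae
  filter_upwards [ae_restrict_mem measurableSet_Ioi] with y hy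
  have hy' : (0:ℝ) < y := hy
  have hxy : (0:ℝ) < x + y := by linarith
  rw [Kf, Wf, ← ENNReal.ofReal_mul (by positivity)]
  exact ENNReal.ofReal_le_ofReal (kern_row hx hy')

lemma col_bound {a : ℝ} (ha1 : -(1/2:ℝ) < a) (ha2 : a < 1/2) {y : ℝ} (hy : 0 < y) :
    ∫⁻ x in Ioi (0:ℝ), Kf a x y * Wf y x
      ≤ ENNReal.ofReal (π / Real.cos (π * a)) := by
  have hb : ∫⁻ x in Ioi (0:ℝ), ENNReal.ofReal ((x/y) ^ (-(a + 2⁻¹)) / (y+x))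
      = ENNReal.ofReal (π / Real.cos (π * a)) := by
    rw [rowL hy (by linarith) (by linarith), show -(a + 2⁻¹) + 1 = 2⁻¹ - a by ring,
      show π * (2⁻¹ - a) = π/2 - π * a by ring, Real.sin_pi_div_two_sub]
  rw [← hb]
  apply lintegral_mono_ae
  filter_upwards [ae_restrict_mem measurableSet_Ioi] with x hx
  have hx' : (0:ℝ) < x := hx
  have hxy : (0:ℝ) < x + y := by linarith
  rw [Kf, Wf, ← ENNReal.ofReal_mul (by positivity)]
  exact ENNReal.ofReal_le_ofReal (kern_col hx' hy)

lemma WW_one {x y : ℝ} (hx : 0 < x) (hy : 0 < y) : Wf x y * Wf y x = 1 := by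
  rw [Wf, Wf, ← ENNReal.ofReal_mul (Real.rpow_nonneg (by positivity) _),
    ← Real.mul_rpow (by positivity) (by positivity),
    div_mul_div_comm, mul_comm y x, div_self (by positivity), Real.one_rpow,
    ENNReal.ofReal_one]

lemma CS_bound {a : ℝ} (ha1 : -(1/2:ℝ) < a) (ha2 : a < 1/2) {g : ℝ → ℝ}
    (hgm : Measurable g) {x : ℝ} (hx : 0 < x) :
    (∫⁻ y in Ioi (0:ℝ), Kf a x y * ENNReal.ofReal |g y|) ^ (2:ℝ)
      ≤ ENNReal.ofReal (π / Real.cos (π * a)) *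
        ∫⁻ y in Ioi (0:ℝ), Kf a x y * Wf y x * ENNReal.ofReal |g y| ^ (2:ℝ) := by
  set μ := volume.restrict (Ioi (0:ℝ))
  have hpq : Real.HolderConjugate 2 2 := Real.HolderConjugate.two_two
  set u : ℝ → ENNReal := fun y => (Kf a x y * Wf x y) ^ (2⁻¹:ℝ) with hu
  set v : ℝ → ENNReal := fun y =>
    (Kf a x y * Wf y x * ENNReal.ofReal |g y| ^ (2:ℝ)) ^ (2⁻¹:ℝ) with hv
  have hum : Measurable u := ((Kf_meas_x a x).mul (Wf_meas_x x)).pow measurable_const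
  have hvm : Measurable v :=
    (((Kf_meas_x a x).mul (Wf_meas_y x)).mul
      ((hgm.abs.ennreal_ofReal).pow measurable_const)).pow measurable_const
  have huv : ∀ᵐ y ∂μ, Kf a x y * ENNReal.ofReal |g y| = u y * v y := by
    filter_upwards [ae_restrict_mem measurableSet_Ioi] with y hy
    have hy' : (0:ℝ) < y := hy
    rw [hu, hv, ← ENNReal.mul_rpow_of_nonneg _ _ (by norm_num : (0:ℝ) ≤ 2⁻¹)]
    have hre : Kf a x y * Wf x y * (Kf a x y * Wf y x * ENNReal.ofReal |g y| ^ (2:ℝ))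
        = (Kf a x y * ENNReal.ofReal |g y|) ^ (2:ℝ) := by
      rw [ENNReal.mul_rpow_of_nonneg _ _ (by norm_num : (0:ℝ) ≤ 2)]
      have hK2 : Kf a x y ^ (2:ℝ) = Kf a x y * Kf a x y := by
        rw [show (2:ℝ) = (1:ℝ) + 1 by norm_num,
          ENNReal.rpow_add_of_nonneg _ _ zero_le_one zero_le_one, ENNReal.rpow_one]
      rw [hK2]
      calc Kf a x y * Wf x y * (Kf a x y * Wf y x * ENNReal.ofReal |g y| ^ (2:ℝ))
          = (Kf a x y * Kf a x y) * (Wf x y * Wf y x) * ENNReal.ofReal |g y| ^ (2:ℝ) := by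
            ring
        _ = (Kf a x y * Kf a x y) * ENNReal.ofReal |g y| ^ (2:ℝ) := by
            rw [WW_one hx hy', mul_one]
    rw [hre, ← ENNReal.rpow_mul]
    norm_num
  have hh := ENNReal.lintegral_mul_le_Lp_mul_Lq μ hpq hum.aemeasurable hvm.aemeasurable
  have hu2 : ∀ y, u y ^ (2:ℝ) = Kf a x y * Wf x y := by
    intro y
    rw [hu, ← ENNReal.rpow_mul]
    norm_num
  have hv2 : ∀ y, v y ^ (2:ℝ) = Kf a x y * Wf y x * ENNReal.ofReal |g y| ^ (2:ℝ) := by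
    intro y
    rw [hv, ← ENNReal.rpow_mul]
    norm_num
  have hIle : (∫⁻ y, Kf a x y * ENNReal.ofReal |g y| ∂μ)
      ≤ (∫⁻ y, Kf a x y * Wf x y ∂μ) ^ ((1:ℝ)/2) *
        (∫⁻ y, Kf a x y * Wf y x * ENNReal.ofReal |g y| ^ (2:ℝ) ∂μ) ^ ((1:ℝ)/2) := by
    calc ∫⁻ y, Kf a x y * ENNReal.ofReal |g y| ∂μ = ∫⁻ y, u y * v y ∂μ :=
          lintegral_congr_ae huv
      _ ≤ (∫⁻ y, u y ^ (2:ℝ) ∂μ) ^ ((1:ℝ)/2) * (∫⁻ y, v y ^ (2:ℝ) ∂μ) ^ ((1:ℝ)/2) := hh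
      _ = _ := by simp only [hu2, hv2]
  calc (∫⁻ y, Kf a x y * ENNReal.ofReal |g y| ∂μ) ^ (2:ℝ)
      ≤ ((∫⁻ y, Kf a x y * Wf x y ∂μ) ^ ((1:ℝ)/2) *
        (∫⁻ y, Kf a x y * Wf y x * ENNReal.ofReal |g y| ^ (2:ℝ) ∂μ) ^ ((1:ℝ)/2)) ^ (2:ℝ) :=
        ENNReal.rpow_le_rpow hIle (by norm_num)
    _ = (∫⁻ y, Kf a x y * Wf x y ∂μ) *
        (∫⁻ y, Kf a x y * Wf y x * ENNReal.ofReal |g y| ^ (2:ℝ) ∂μ) := by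
        rw [ENNReal.mul_rpow_of_nonneg _ _ (by norm_num : (0:ℝ) ≤ 2),
          ← ENNReal.rpow_mul, ← ENNReal.rpow_mul]
        norm_num
    _ ≤ _ := mul_le_mul' (row_bound ha1 ha2 hx) le_rfl

theorem stmt_9 (a : ℝ) (ha : |a| < 1/2) (f : ℝ → ℝ)
    (hf : MemLp f 2 (volume.restrict (Ioi 0))) :
    (∀ x > (0:ℝ),
      IntegrableOn (fun y => (y / x) ^ a * (Real.exp (-(x + y) / 2) / (x + y)) * f y)
        (Ioi 0)) ∧
    MemLp (fun x => ∫ y in Ioi (0:ℝ),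
        (y / x) ^ a * (Real.exp (-(x + y) / 2) / (x + y)) * f y) 2
      (volume.restrict (Ioi 0)) ∧
    eLpNorm (fun x => ∫ y in Ioi (0:ℝ),
        (y / x) ^ a * (Real.exp (-(x + y) / 2) / (x + y)) * f y) 2
      (volume.restrict (Ioi 0)) ≤
      ENNReal.ofReal (Real.pi / Real.cos (Real.pi * a)) *
        eLpNorm f 2 (volume.restrict (Ioi 0)) := by
  have ha1 : -(1/2 : ℝ) < a := neg_lt_of_abs_lt ha
  have ha2 : a < 1/2 := lt_of_abs_lt ha
  obtain ⟨g, hgm0, hfg⟩ := hf.1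
  have hgm : Measurable g := hgm0.measurable
  have hg : MemLp g 2 (volume.restrict (Ioi 0)) := hf.ae_eq hfg
  set μ := volume.restrict (Ioi (0:ℝ)) with hμ
  set oC : ENNReal := ENNReal.ofReal (π / Real.cos (π * a)) with hoC
  have hCne : oC ≠ ⊤ := ENNReal.ofReal_ne_top
  set G : ℝ → ENNReal := fun y => ENNReal.ofReal |g y| ^ (2:ℝ) with hG
  have hGm : Measurable G := (hgm.abs.ennreal_ofReal).pow measurable_const
  have hGne : ∀ y, G y ≠ ⊤ := fun y =>
    ENNReal.rpow_ne_top_of_nonneg (by norm_num) ENNReal.ofReal_ne_top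
  set N : ENNReal := ∫⁻ y, G y ∂μ with hN
  have hsng : eLpNorm g 2 μ = N ^ (2⁻¹ : ℝ) := by
    rw [eLpNorm_eq_lintegral_rpow_enorm_toReal (by norm_num) (by norm_num), hN]
    have h1 : ∀ y : ℝ, (‖g y‖ₑ) ^ ((2:ENNReal).toReal) = G y := by
      intro y
      rw [Real.enorm_eq_ofReal_abs, hG]
      norm_num
    rw [lintegral_congr h1]
    norm_num
  have hNne : N ≠ ⊤ := by
    intro h
    rw [h, ENNReal.top_rpow_of_pos (by norm_num)] at hsng
    exact hg.2.ne hsng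
  -- bound on B x
  have hBle : ∀ x : ℝ, 0 < x →
      (∫⁻ y, Kf a x y * Wf y x * G y ∂μ)
        ≤ ENNReal.ofReal (3 * x ^ (-(a + 2⁻¹)) / x) * N := by
    intro x hx
    calc ∫⁻ y, Kf a x y * Wf y x * G y ∂μ
        ≤ ∫⁻ y, ENNReal.ofReal (3 * x ^ (-(a + 2⁻¹)) / x) * G y ∂μ := by
          apply lintegral_mono_ae
          filter_upwards [ae_restrict_mem measurableSet_Ioi] with y hy
          have hy' : (0:ℝ) < y := hy
          apply mul_le_mul' _ le_rfl
          rw [Kf, Wf, ← ENNReal.ofReal_mul (by positivity)]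
          exact ENNReal.ofReal_le_ofReal (kern_colB ha1 ha2 hx hy')
      _ = ENNReal.ofReal (3 * x ^ (-(a + 2⁻¹)) / x) * N :=
          lintegral_const_mul' _ _ ENNReal.ofReal_ne_top
  -- finiteness of I x
  have hIfin : ∀ x : ℝ, 0 < x →
      (∫⁻ y, Kf a x y * ENNReal.ofReal |g y| ∂μ) < ⊤ := by
    intro x hx
    have h2 : (∫⁻ y, Kf a x y * ENNReal.ofReal |g y| ∂μ) ^ (2:ℝ) < ⊤ := by
      apply lt_of_le_of_lt (CS_bound ha1 ha2 hgm hx)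
      exact ENNReal.mul_lt_top hCne.lt_top
        ((hBle x hx).trans_lt
          (ENNReal.mul_lt_top ENNReal.ofReal_ne_top.lt_top hNne.lt_top))
    have h3 : (∫⁻ y, Kf a x y * ENNReal.ofReal |g y| ∂μ)
        = ((∫⁻ y, Kf a x y * ENNReal.ofReal |g y| ∂μ) ^ (2:ℝ)) ^ (2⁻¹:ℝ) := by
      rw [← ENNReal.rpow_mul]
      norm_num
    rw [h3]
    exact ENNReal.rpow_lt_top_of_nonneg (by norm_num) h2.ne
  -- integrability of the g-kernel
  have hIntg : ∀ x : ℝ, 0 < x →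
      IntegrableOn (fun y => (y / x) ^ a * (Real.exp (-(x + y) / 2) / (x + y)) * g y)
        (Ioi 0) := by
    intro x hx
    constructor
    · apply Measurable.aestronglyMeasurable
      exact (((measurable_id.div_const x).pow measurable_const).mul
        ((((measurable_const.add measurable_id).neg.div_const 2).exp).div
          (measurable_const.add measurable_id))).mul hgm
    · rw [hasFiniteIntegral_iff_norm]
      have hcong : ∫⁻ y, ENNReal.ofReal ‖(y / x) ^ a * (Real.exp (-(x + y) / 2) / (x + y)) * g y‖ ∂μ
          = ∫⁻ y, Kf a x y * ENNReal.ofReal |g y| ∂μ := by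
        apply lintegral_congr_ae
        filter_upwards [ae_restrict_mem measurableSet_Ioi] with y hy
        have hy' : (0:ℝ) < y := hy
        have hxy : (0:ℝ) < x + y := by linarith
        have hknn : (0:ℝ) ≤ (y / x) ^ a * (Real.exp (-(x + y) / 2) / (x + y)) := by positivity
        rw [Real.norm_eq_abs, abs_mul, abs_of_nonneg hknn, Kf,
          ENNReal.ofReal_mul hknn]
      rw [hcong]
      exact hIfin x hx
  -- the output function (with g)
  set F : ℝ → ℝ := fun x => ∫ y in Ioi (0:ℝ),
    (y / x) ^ a * (Real.exp (-(x + y) / 2) / (x + y)) * g y with hF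
  have hFm : AEStronglyMeasurable F μ := by
    apply StronglyMeasurable.aestronglyMeasurable
    apply MeasureTheory.StronglyMeasurable.integral_prod_right'
      (f := fun p : ℝ × ℝ => (p.2 / p.1) ^ a * (Real.exp (-(p.1 + p.2) / 2) / (p.1 + p.2)) * g p.2)
    apply Measurable.stronglyMeasurable
    exact (((measurable_snd.div measurable_fst).pow measurable_const).mul
      ((((measurable_fst.add measurable_snd).neg.div_const 2).exp).div
        (measurable_fst.add measurable_snd))).mul (hgm.comp measurable_snd)
  -- the key norm bound
  have henorm : ∀ᵐ x ∂μ, (‖F x‖₊ : ENNReal) ≤ ∫⁻ y, Kf a x y * ENNReal.ofReal |g y| ∂μ := by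
    filter_upwards [ae_restrict_mem measurableSet_Ioi] with x hx
    have hx' : (0:ℝ) < x := hx
    calc (‖F x‖₊ : ENNReal)
        ≤ ∫⁻ y, (‖(y / x) ^ a * (Real.exp (-(x + y) / 2) / (x + y)) * g y‖₊ : ENNReal) ∂μ :=
          enorm_integral_le_lintegral_enorm _
      _ = ∫⁻ y, Kf a x y * ENNReal.ofReal |g y| ∂μ := by
          apply lintegral_congr_ae
          filter_upwards [ae_restrict_mem measurableSet_Ioi] with y hy
          have hy' : (0:ℝ) < y := hy
          have hxy : (0:ℝ) < x + y := by linarith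
          have hknn : (0:ℝ) ≤ (y / x) ^ a * (Real.exp (-(x + y) / 2) / (x + y)) := by positivity
          rw [← enorm_eq_nnnorm, Real.enorm_eq_ofReal_abs, abs_mul, abs_of_nonneg hknn, Kf,
            ENNReal.ofReal_mul hknn]
  -- the squared-norm estimate
  have hsum : ∫⁻ x, (‖F x‖₊ : ENNReal) ^ (2:ℝ) ∂μ ≤ oC * (oC * N) := by
    have hABm : Measurable (fun p : ℝ × ℝ => Kf a p.1 p.2 * Wf p.2 p.1 * G p.2) :=
      ((Kf_meas a).mul (Wf_meas.comp measurable_swap)).mul (hGm.comp measurable_snd)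
    calc ∫⁻ x, (‖F x‖₊ : ENNReal) ^ (2:ℝ) ∂μ
        ≤ ∫⁻ x, oC * ∫⁻ y, Kf a x y * Wf y x * G y ∂μ ∂μ := by
          apply lintegral_mono_ae
          filter_upwards [ae_restrict_mem measurableSet_Ioi, henorm] with x hx hle
          have hx' : (0:ℝ) < x := hx
          calc (‖F x‖₊ : ENNReal) ^ (2:ℝ)
              ≤ (∫⁻ y, Kf a x y * ENNReal.ofReal |g y| ∂μ) ^ (2:ℝ) :=
                ENNReal.rpow_le_rpow hle (by norm_num)
            _ ≤ oC * ∫⁻ y, Kf a x y * Wf y x * G y ∂μ := CS_bound ha1 ha2 hgm hx'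
      _ = oC * ∫⁻ x, ∫⁻ y, Kf a x y * Wf y x * G y ∂μ ∂μ :=
          lintegral_const_mul' _ _ hCne
      _ = oC * ∫⁻ y, ∫⁻ x, Kf a x y * Wf y x * G y ∂μ ∂μ := by
          rw [lintegral_lintegral_swap hABm.aemeasurable]
      _ ≤ oC * (oC * N) := by
          apply mul_le_mul' le_rfl
          calc ∫⁻ y, ∫⁻ x, Kf a x y * Wf y x * G y ∂μ ∂μ
              ≤ ∫⁻ y, oC * G y ∂μ := by
                apply lintegral_mono_ae
                filter_upwards [ae_restrict_mem measurableSet_Ioi] with y hy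
                have hy' : (0:ℝ) < y := hy
                calc ∫⁻ x, Kf a x y * Wf y x * G y ∂μ
                    = (∫⁻ x, Kf a x y * Wf y x ∂μ) * G y :=
                      lintegral_mul_const' _ _ (hGne y)
                  _ ≤ oC * G y := mul_le_mul' (col_bound ha1 ha2 hy') le_rfl
            _ = oC * N := lintegral_const_mul' _ _ hCne
  -- eLpNorm bound for F
  have hFle : eLpNorm F 2 μ ≤ oC * eLpNorm g 2 μ := by
    rw [eLpNorm_eq_lintegral_rpow_enorm_toReal (by norm_num) (by norm_num), hsng]
    have h2 : ((2:ENNReal)).toReal = (2:ℝ) := by norm_num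
    rw [h2]
    calc (∫⁻ x, (‖F x‖₊ : ENNReal) ^ (2:ℝ) ∂μ) ^ ((1:ℝ)/2)
        ≤ (oC * (oC * N)) ^ ((1:ℝ)/2) := ENNReal.rpow_le_rpow hsum (by norm_num)
      _ = oC * N ^ (2⁻¹:ℝ) := by
          rw [← mul_assoc, ENNReal.mul_rpow_of_nonneg _ _ (by norm_num : (0:ℝ) ≤ 1/2)]
          congr 1
          · rw [show oC * oC = oC ^ (2:ℝ) by
              rw [show (2:ℝ) = (1:ℝ)+1 by norm_num,
                ENNReal.rpow_add_of_nonneg _ _ zero_le_one zero_le_one, ENNReal.rpow_one],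
              ← ENNReal.rpow_mul]
            norm_num
          · norm_num
  have hFmem : MemLp F 2 μ :=
    ⟨hFm, hFle.trans_lt (ENNReal.mul_lt_top hCne.lt_top hg.2)⟩
  -- transfer from g to f
  have hfun : (fun x => ∫ y in Ioi (0:ℝ),
      (y / x) ^ a * (Real.exp (-(x + y) / 2) / (x + y)) * f y) = F := by
    funext x
    apply integral_congr_ae
    filter_upwards [hfg] with y hy
    rw [hy]
  refine ⟨?_, ?_, ?_⟩
  · intro x hx
    apply (hIntg x hx).congr
    filter_upwards [hfg] with y hy
    rw [hy]
  · rw [hfun]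
    exact hFmem
  · rw [hfun, eLpNorm_congr_ae hfg]
    exact hFle
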